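/- Let g = (1 2 ⋯ n) ∈ S_n, let H = ⟨g⟩, let ζ ∈ ℂ be a primitive n-th root of unity, and define ψ : S_n → ℂ by ψ(g^i) = ζ^i for 0 ≤ i < n and ψ(σ) = 0 for σ ∉ H; define χ : S_n → ℂ by χ(τ) = (1/n) · Σ_{σ ∈ S_n} ψ(σ⁻¹τσ). Then the restriction of χ to the subgroup of permutations fixing n is the character of the regular representation of S_{n−1}: for every τ ∈ S_n with τ(n) = n, χ(τ) = (n−1)! if τ is the identity and χ(τ) = 0 otherwise. -/

import Mathlib

open Fin.NatCast

lemma finRotate_pow_apply (m k : ℕ) (i : Fin (m+1)) :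
    (finRotate (m+1) ^ k) i = i + (k : Fin (m+1)) := by
  induction k generalizing i with
  | zero => simp
  | succ k ih =>
    rw [pow_succ, Equiv.Perm.mul_apply, finRotate_succ_apply, ih]
    push_cast
    abel

lemma zpowers_fix_eq_one (m : ℕ) (π : Equiv.Perm (Fin (m+1)))
    (hπ : π ∈ Subgroup.zpowers (finRotate (m+1))) (x : Fin (m+1)) (hx : π x = x) :
    π = 1 := by
  rw [← mem_powers_iff_mem_zpowers] at hπ
  obtain ⟨k, rfl⟩ := hπ
  rw [finRotate_pow_apply] at hx
  have h0 : (k : Fin (m+1)) = 0 := by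
    have := hx
    nth_rewrite 2 [← add_zero x] at this
    exact add_left_cancel this
  ext i
  simp [finRotate_pow_apply, h0]

theorem induced_character_restriction_regular (n : ℕ) (hn : 0 < n) (ζ : ℂ)
    (hζ : IsPrimitiveRoot ζ n) (ψ χ : Equiv.Perm (Fin n) → ℂ)
    (hψ₁ : ∀ i : ℕ, i < n → ψ (finRotate n ^ i) = ζ ^ i)
    (hψ₂ : ∀ σ : Equiv.Perm (Fin n), σ ∉ Subgroup.zpowers (finRotate n) → ψ σ = 0)
    (hχ : ∀ τ : Equiv.Perm (Fin n),
      χ τ = (1 / (n : ℂ)) * ∑ σ : Equiv.Perm (Fin n), ψ (σ⁻¹ * τ * σ)) :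
    ∀ τ : Equiv.Perm (Fin n),
      τ ⟨n - 1, Nat.sub_lt hn Nat.one_pos⟩ = ⟨n - 1, Nat.sub_lt hn Nat.one_pos⟩ →
      χ τ = if τ = 1 then ((n - 1).factorial : ℂ) else 0 := by
  obtain ⟨m, rfl⟩ := Nat.exists_eq_succ_of_ne_zero hn.ne'
  intro τ hτ
  split_ifs with h
  · subst h
    rw [hχ]
    have hψ1 : ψ 1 = 1 := by simpa using hψ₁ 0 hn
    have hconj : ∀ σ : Equiv.Perm (Fin (m+1)), σ⁻¹ * 1 * σ = 1 := by intro σ; group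
    have hsum : ∑ σ : Equiv.Perm (Fin (m+1)), ψ (σ⁻¹ * 1 * σ) = ((m+1).factorial : ℂ) := by
      simp [hconj, hψ1, Finset.card_univ, Fintype.card_perm]
    rw [hsum, Nat.succ_sub_one, Nat.factorial_succ]
    have hne : ((m : ℂ) + 1) ≠ 0 := Nat.cast_add_one_ne_zero m
    push_cast
    field_simp
  · rw [hχ]
    rw [Finset.sum_eq_zero, mul_zero]
    intro σ _
    apply hψ₂
    intro hmem
    apply h
    have hfix : (σ⁻¹ * τ * σ) (σ⁻¹ ⟨m + 1 - 1, Nat.sub_lt hn Nat.one_pos⟩)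
        = σ⁻¹ ⟨m + 1 - 1, Nat.sub_lt hn Nat.one_pos⟩ := by
      simp only [Equiv.Perm.mul_apply, Equiv.Perm.coe_inv, Equiv.apply_symm_apply]
      rw [show τ ⟨m + 1 - 1, Nat.sub_lt hn Nat.one_pos⟩ = ⟨m + 1 - 1, Nat.sub_lt hn Nat.one_pos⟩ from hτ]
    have h1 := zpowers_fix_eq_one m _ hmem _ hfix
    have : τ = σ * (σ⁻¹ * τ * σ) * σ⁻¹ := by group
    rw [this, h1]
    group
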